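/- Let N_0, N_1 ∈ C(H,K) be channels, λ_0, λ_1 ∈ (0,1) with λ_0 + λ_1 = 1, and N := λ_0 N_0 + λ_1 N_1. Then the non-commutative confusability graph satisfies S(N) ⊇ S(N_0) and S(N) ⊇ S(N_1). Consequently, if N lies in the relative interior of C(H,K), then S(N) = B(H). -/

import Mathlib

set_option linter.unusedSectionVars false
set_option maxHeartbeats 1000000


/-- `G` is a Kraus representation of the channel `N` (including trace preservation). -/
def IsKrausRep {ι κ : Type*} [Fintype ι] [DecidableEq ι] [Fintype κ] [DecidableEq κ]
    (N : Matrix ι ι ℂ →ₗ[ℂ] Matrix κ κ ℂ) {m : ℕ} (G : Fin m → Matrix κ ι ℂ) : Prop :=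
  (∀ a, N a = ∑ j, G j * a * (G j).conjTranspose) ∧
    (∑ j, (G j).conjTranspose * G j = 1)

/-- Kraus characterization of quantum channels (CPTP maps). -/
def IsCPTP {ι κ : Type*} [Fintype ι] [DecidableEq ι] [Fintype κ] [DecidableEq κ]
    (N : Matrix ι ι ℂ →ₗ[ℂ] Matrix κ κ ℂ) : Prop :=
  ∃ (m : ℕ) (G : Fin m → Matrix κ ι ℂ), IsKrausRep N G

/-- The non-commutative confusability graph `S(N) = span{Eⱼ* Eᵢ}` associated to a
Kraus family. -/
noncomputable def confGraph {ι κ : Type*} [Fintype ι] [Fintype κ] {m : ℕ} (G : Fin m → Matrix κ ι ℂ) :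
    Submodule ℂ (Matrix ι ι ℂ) :=
  Submodule.span ℂ {x : Matrix ι ι ℂ | ∃ i j, x = (G j).conjTranspose * G i}

/-- The algebraic relative interior of a set in a complex vector space. -/
def AlgRelInterior {V : Type*} [AddCommGroup V] [Module ℂ V] (s : Set V) (x : V) :
    Prop :=
  x ∈ s ∧ ∀ y ∈ s, ∃ t : ℝ, 1 < t ∧ y + ((t : ℝ) : ℂ) • (x - y) ∈ s


section Aux
variable {ι κ : Type*} [Fintype ι] [DecidableEq ι] [Fintype κ] [DecidableEq κ]

noncomputable def toEuc : Matrix κ ι ℂ ≃ₗ[ℂ] EuclideanSpace ℂ (κ × ι) where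
  toFun M := WithLp.toLp 2 (fun p : κ × ι => M p.1 p.2)
  invFun v := Matrix.of fun k l => v (k, l)
  map_add' _ _ := rfl
  map_smul' _ _ := rfl
  left_inv _ := rfl
  right_inv _ := rfl

lemma entry_eq {m : ℕ} (N : Matrix ι ι ℂ →ₗ[ℂ] Matrix κ κ ℂ)
    (E : Fin m → Matrix κ ι ℂ) (hE : ∀ a, N a = ∑ i, E i * a * (E i).conjTranspose)
    (p r : κ × ι) :
    ∑ i, E i r.1 r.2 * (starRingEnd ℂ) (E i p.1 p.2)
      = N (Matrix.single r.2 p.2 1) r.1 p.1 := by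
  rw [hE, Matrix.sum_apply]
  refine Finset.sum_congr rfl fun i _ => ?_
  simp [Matrix.mul_apply, Matrix.single, Matrix.conjTranspose_apply, Finset.sum_ite_eq,
    Finset.mul_sum, ite_and]

lemma sum_normsq {m : ℕ} (N : Matrix ι ι ℂ →ₗ[ℂ] Matrix κ κ ℂ)
    (E : Fin m → Matrix κ ι ℂ) (hE : ∀ a, N a = ∑ i, E i * a * (E i).conjTranspose)
    (q : EuclideanSpace ℂ (κ × ι)) :
    ∑ i, (inner ℂ (toEuc (E i)) q : ℂ) * (starRingEnd ℂ) (inner ℂ (toEuc (E i)) q : ℂ)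
      = ∑ p : κ × ι, ∑ r : κ × ι,
          q p * (starRingEnd ℂ) (q r) * N (Matrix.single r.2 p.2 1) r.1 p.1 := by
  have h : ∀ i : Fin m, (inner ℂ (toEuc (E i)) q : ℂ)
      = ∑ p : κ × ι, (starRingEnd ℂ) (E i p.1 p.2) * q p := by
    intro i; rw [PiLp.inner_apply]; exact Finset.sum_congr rfl fun p _ => RCLike.inner_apply' _ _
  calc ∑ i, (inner ℂ (toEuc (E i)) q : ℂ) * (starRingEnd ℂ) (inner ℂ (toEuc (E i)) q : ℂ)
      = ∑ i, ∑ p : κ × ι, ∑ r : κ × ι, ((starRingEnd ℂ) (E i p.1 p.2) * q p)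
          * ((starRingEnd ℂ) ((starRingEnd ℂ) (E i r.1 r.2) * q r)) := by
        refine Finset.sum_congr rfl fun i _ => ?_
        rw [h, map_sum, Finset.sum_mul_sum]
    _ = ∑ p : κ × ι, ∑ r : κ × ι, ∑ i,
          q p * (starRingEnd ℂ) (q r) * (E i r.1 r.2 * (starRingEnd ℂ) (E i p.1 p.2)) := by
        rw [Finset.sum_comm]
        refine Finset.sum_congr rfl fun p _ => ?_
        rw [Finset.sum_comm]
        refine Finset.sum_congr rfl fun r _ => Finset.sum_congr rfl fun i _ => ?_
        simp only [map_mul, Complex.conj_conj]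
        ring
    _ = ∑ p : κ × ι, ∑ r : κ × ι,
          q p * (starRingEnd ℂ) (q r) * N (Matrix.single r.2 p.2 1) r.1 p.1 := by
        refine Finset.sum_congr rfl fun p _ => Finset.sum_congr rfl fun r _ => ?_
        rw [← Finset.mul_sum, entry_eq N E hE p r]

lemma mem_span_of_rep {m n : ℕ} (N : Matrix ι ι ℂ →ₗ[ℂ] Matrix κ κ ℂ)
    (E : Fin m → Matrix κ ι ℂ) (hE : ∀ a, N a = ∑ i, E i * a * (E i).conjTranspose)
    (F : Fin n → Matrix κ ι ℂ) (hF : ∀ a, N a = ∑ j, F j * a * (F j).conjTranspose)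
    (i : Fin m) : E i ∈ Submodule.span ℂ (Set.range F) := by
  set S : Submodule ℂ (EuclideanSpace ℂ (κ × ι)) :=
    Submodule.span ℂ (Set.range fun j => toEuc (F j)) with hS
  have hmem : toEuc (E i) ∈ S := by
    rw [← Submodule.orthogonal_orthogonal S]
    rw [Submodule.mem_orthogonal]
    intro q hq
    -- q is orthogonal to every F j
    have hFq : ∀ j, (inner ℂ (toEuc (F j)) q : ℂ) = 0 := fun j =>
      (Submodule.mem_orthogonal S q).mp hq _ (Submodule.subset_span ⟨j, rfl⟩)
    have hsum : ∑ i', (inner ℂ (toEuc (E i')) q : ℂ) * (starRingEnd ℂ) (inner ℂ (toEuc (E i')) q : ℂ) = 0 := by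
      rw [sum_normsq N E hE q, ← sum_normsq N F hF q]
      simp [hFq]
    have hnn : ∀ i' : Fin m, (inner ℂ (toEuc (E i')) q : ℂ) = 0 := by
      have : ∑ i', Complex.normSq (inner ℂ (toEuc (E i')) q : ℂ) = 0 := by
        have h2 := hsum
        simp_rw [Complex.mul_conj] at h2
        rw [← Complex.ofReal_sum] at h2
        exact_mod_cast h2
      intro i'
      have h0 : Complex.normSq (inner ℂ (toEuc (E i')) q : ℂ) = 0 := by
        refine (Finset.sum_eq_zero_iff_of_nonneg ?_).mp this i' (Finset.mem_univ _)
        intro j _; exact Complex.normSq_nonneg _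
      exact Complex.normSq_eq_zero.mp h0
    rw [← inner_conj_symm]
    rw [hnn i]
    simp
  have : Set.range (fun j => toEuc (F j)) = toEuc '' Set.range F := by
    rw [← Set.range_comp]; rfl
  rw [hS, this, ← LinearEquiv.coe_coe, ← Submodule.map_span] at hmem
  rcases hmem with ⟨y, hy, hxy⟩
  have : y = E i := toEuc.injective hxy
  rwa [← this]

lemma conf_le_of_mem_span {m n : ℕ} (E : Fin m → Matrix κ ι ℂ) (F : Fin n → Matrix κ ι ℂ)
    (h : ∀ i, E i ∈ Submodule.span ℂ (Set.range F)) : confGraph E ≤ confGraph F := by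
  have key : ∀ x ∈ Submodule.span ℂ (Set.range F), ∀ y ∈ Submodule.span ℂ (Set.range F),
      x.conjTranspose * y ∈ confGraph F := by
    intro x hx
    induction hx using Submodule.span_induction with
    | mem x hx =>
      intro y hy
      induction hy using Submodule.span_induction with
      | mem y hy =>
        obtain ⟨j, rfl⟩ := hx
        obtain ⟨i, rfl⟩ := hy
        exact Submodule.subset_span ⟨i, j, rfl⟩
      | zero => simp [Submodule.zero_mem]
      | add y z _ _ hy hz => rw [Matrix.mul_add]; exact Submodule.add_mem _ hy hz
      | smul c y _ hy => rw [Matrix.mul_smul]; exact Submodule.smul_mem _ _ hy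
    | zero => intro y hy; simp [Submodule.zero_mem]
    | add x z _ _ hx hz => intro y hy
                           rw [Matrix.conjTranspose_add, Matrix.add_mul]
                           exact Submodule.add_mem _ (hx y hy) (hz y hy)
    | smul c x _ hx => intro y hy
                       rw [Matrix.conjTranspose_smul, Matrix.smul_mul]
                       exact Submodule.smul_mem _ _ (hx y hy)
  refine Submodule.span_le.mpr ?_
  rintro x ⟨i, j, rfl⟩
  exact key _ (h j) _ (h i)

lemma key_half (N₀ N₁ N : Matrix ι ι ℂ →ₗ[ℂ] Matrix κ κ ℂ) (l₀ l₁ : ℝ)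
    (h₀ : 0 < l₀) (h₁ : 0 ≤ l₁)
    (hN : ∀ a, N a = ((l₀ : ℝ) : ℂ) • N₀ a + ((l₁ : ℝ) : ℂ) • N₁ a)
    {mE : ℕ} (E : Fin mE → Matrix κ ι ℂ)
    (hE : ∀ a, N₀ a = ∑ i, E i * a * (E i).conjTranspose)
    {mF : ℕ} (F : Fin mF → Matrix κ ι ℂ)
    (hF : ∀ a, N₁ a = ∑ j, F j * a * (F j).conjTranspose)
    {m : ℕ} (G : Fin m → Matrix κ ι ℂ)
    (hG : ∀ a, N a = ∑ j, G j * a * (G j).conjTranspose) :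
    confGraph E ≤ confGraph G := by
  set c₀ : ℂ := ((Real.sqrt l₀ : ℝ) : ℂ) with hc₀
  set c₁ : ℂ := ((Real.sqrt l₁ : ℝ) : ℂ) with hc₁
  set H : Fin (mE + mF) → Matrix κ ι ℂ :=
    Fin.append (fun i => c₀ • E i) (fun j => c₁ • F j) with hH
  have hsq : ∀ (c : ℝ) (X : Matrix κ ι ℂ) (a : Matrix ι ι ℂ),
      ((c : ℂ) • X) * a * ((c : ℂ) • X).conjTranspose
        = ((c * c : ℝ) : ℂ) • (X * a * X.conjTranspose) := by
    intro c X a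
    rw [Matrix.conjTranspose_smul, Matrix.smul_mul, Matrix.smul_mul, Matrix.mul_smul,
      smul_smul]
    congr 1
    simp [Complex.ext_iff]
  have hHrep : ∀ a, N a = ∑ r, H r * a * (H r).conjTranspose := by
    intro a
    rw [Fin.sum_univ_add]
    simp only [hH, Fin.append_left, Fin.append_right]
    rw [hN a, hE a, hF a, Finset.smul_sum, Finset.smul_sum]
    congr 1
    · refine Finset.sum_congr rfl fun i _ => ?_
      rw [hsq, Real.mul_self_sqrt h₀.le]
    · refine Finset.sum_congr rfl fun j _ => ?_
      rw [hsq, Real.mul_self_sqrt h₁]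
  have step1 : confGraph E ≤ confGraph H := by
    refine conf_le_of_mem_span E H fun i => ?_
    have hc₀ne : c₀ ≠ 0 := by
      simp [hc₀, Complex.ext_iff]
      positivity
    have : E i = c₀⁻¹ • H (Fin.castAdd mF i) := by
      simp only [hH, Fin.append_left, smul_smul, inv_mul_cancel₀ hc₀ne, one_smul]
    rw [this]
    exact Submodule.smul_mem _ _ (Submodule.subset_span ⟨Fin.castAdd mF i, rfl⟩)
  have step2 : confGraph H ≤ confGraph G :=
    conf_le_of_mem_span H G fun r => mem_span_of_rep N H hHrep G hG r
  exact le_trans step1 step2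

lemma std_sum_left (a : Matrix ι ι ℂ) :
    ∑ p : κ × ι, Matrix.single p.1 p.2 (1:ℂ) * a * (Matrix.single p.1 p.2 (1:ℂ)).conjTranspose
      = Matrix.trace a • (1 : Matrix κ κ ℂ) := by
  ext x y
  rw [Matrix.sum_apply]
  rw [Fintype.sum_prod_type]
  by_cases h : x = y <;>
  simp [h, Matrix.mul_apply, Matrix.single, Matrix.conjTranspose_apply, ite_and,
    Finset.sum_ite_eq, Finset.sum_ite_eq', Matrix.one_apply, Matrix.trace, Matrix.diag,
    Finset.mul_sum, eq_comm]

lemma std_sum_tp : ∑ p : κ × ι, (Matrix.single p.1 p.2 (1:ℂ)).conjTranspose * Matrix.single p.1 p.2 (1:ℂ)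
      = (Fintype.card κ : ℂ) • (1 : Matrix ι ι ℂ) := by
  ext u v
  rw [Matrix.sum_apply]
  rw [Fintype.sum_prod_type]
  by_cases h : u = v <;>
  simp [h, Matrix.mul_apply, Matrix.single, Matrix.conjTranspose_apply, ite_and,
    Finset.sum_ite_eq, Finset.sum_ite_eq', Matrix.one_apply, eq_comm]

lemma std_mul_std (k : κ) (l l' : ι) :
    (Matrix.single k l' (1:ℂ)).conjTranspose * Matrix.single k l (1:ℂ)
      = Matrix.single l' l (1:ℂ) := by
  ext u v
  simp [Matrix.mul_apply, Matrix.single, Matrix.conjTranspose_apply, ite_and,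
    Finset.sum_ite_eq, Finset.sum_ite_eq']
  by_cases h1 : l = v <;> by_cases h2 : l' = u <;> simp [h1, h2]

variable (ι κ) in
noncomputable def depol : Matrix ι ι ℂ →ₗ[ℂ] Matrix κ κ ℂ :=
  (Matrix.traceLinearMap ι ℂ ℂ).smulRight (((Fintype.card κ : ℂ))⁻¹ • (1 : Matrix κ κ ℂ))

variable (ι κ) in
noncomputable def depolK : Fin (Fintype.card (κ × ι)) → Matrix κ ι ℂ :=
  fun r => ((((Real.sqrt (Fintype.card κ))⁻¹ : ℝ)) : ℂ) •
    Matrix.single ((Fintype.equivFin (κ × ι)).symm r).1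
      ((Fintype.equivFin (κ × ι)).symm r).2 (1 : ℂ)

section NE
variable [Nonempty ι] [Nonempty κ]

lemma card_sqrt_sq : (((Real.sqrt (Fintype.card κ))⁻¹ : ℝ) : ℂ) * (((Real.sqrt (Fintype.card κ))⁻¹ : ℝ) : ℂ)
    = ((Fintype.card κ : ℂ))⁻¹ := by
  have hd : (0 : ℝ) < Fintype.card κ := by positivity
  rw [← Complex.ofReal_mul, ← Real.sqrt_inv, Real.mul_self_sqrt (by positivity)]
  push_cast
  rfl

lemma depol_kraus : (∀ a, depol ι κ a = ∑ j, depolK ι κ j * a * (depolK ι κ j).conjTranspose) ∧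
    (∑ j, (depolK ι κ j).conjTranspose * depolK ι κ j = 1) := by
  have hd : (0 : ℝ) < Fintype.card κ := by positivity
  set c : ℂ := (((Real.sqrt (Fintype.card κ))⁻¹ : ℝ) : ℂ) with hc
  have hsmul : ∀ (X Y : Matrix κ ι ℂ), (c • X).conjTranspose * (c • Y)
      = ((Fintype.card κ : ℂ))⁻¹ • (X.conjTranspose * Y) := by
    intro X Y
    rw [Matrix.conjTranspose_smul, Matrix.smul_mul, Matrix.mul_smul, smul_smul]
    rw [show star c = c by simp [hc], card_sqrt_sq]
  constructor
  · intro a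
    have hcomp := Equiv.sum_comp (Fintype.equivFin (κ × ι)).symm
      (fun p : κ × ι => (c • Matrix.single p.1 p.2 (1:ℂ)) * a
        * (c • Matrix.single p.1 p.2 (1:ℂ)).conjTranspose)
    calc depol ι κ a = ∑ p : κ × ι, (c • Matrix.single p.1 p.2 (1:ℂ)) * a
        * (c • Matrix.single p.1 p.2 (1:ℂ)).conjTranspose := by
          have : ∀ p : κ × ι, (c • Matrix.single p.1 p.2 (1:ℂ)) * a
              * (c • Matrix.single p.1 p.2 (1:ℂ)).conjTranspose
              = ((Fintype.card κ : ℂ))⁻¹ • (Matrix.single p.1 p.2 (1:ℂ) * a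
                * (Matrix.single p.1 p.2 (1:ℂ)).conjTranspose) := by
            intro p
            rw [Matrix.conjTranspose_smul, Matrix.smul_mul, Matrix.smul_mul, Matrix.mul_smul,
              smul_smul, show star c = c by simp [hc], card_sqrt_sq]
          rw [Finset.sum_congr rfl fun p _ => this p, ← Finset.smul_sum, std_sum_left]
          simp [depol, smul_smul, mul_comm]
      _ = ∑ j, depolK ι κ j * a * (depolK ι κ j).conjTranspose := hcomp.symm
  · have hcomp := Equiv.sum_comp (Fintype.equivFin (κ × ι)).symm
      (fun p : κ × ι => (c • Matrix.single p.1 p.2 (1:ℂ)).conjTranspose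
        * (c • Matrix.single p.1 p.2 (1:ℂ)))
    calc ∑ j, (depolK ι κ j).conjTranspose * depolK ι κ j
        = ∑ p : κ × ι, (c • Matrix.single p.1 p.2 (1:ℂ)).conjTranspose
            * (c • Matrix.single p.1 p.2 (1:ℂ)) := hcomp
      _ = 1 := by
          rw [Finset.sum_congr rfl fun p _ => hsmul _ _, ← Finset.smul_sum, std_sum_tp,
            smul_smul, inv_mul_cancel₀ (by exact_mod_cast hd.ne'), one_smul]

lemma depol_conf_top : confGraph (depolK ι κ) = ⊤ := by
  have hd : (0 : ℝ) < Fintype.card κ := by positivity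
  set c : ℂ := (((Real.sqrt (Fintype.card κ))⁻¹ : ℝ) : ℂ) with hc
  refine top_le_iff.mp ?_
  intro a _
  have hstd : ∀ l' l : ι, Matrix.single l' l (1:ℂ) ∈ confGraph (depolK ι κ) := by
    intro l' l
    obtain ⟨k⟩ := ‹Nonempty κ›
    set e := Fintype.equivFin (κ × ι) with he
    have hgen : (depolK ι κ (e (k, l'))).conjTranspose * depolK ι κ (e (k, l))
        = ((Fintype.card κ : ℂ))⁻¹ • Matrix.single l' l (1:ℂ) := by
      simp only [depolK, ← he, Equiv.symm_apply_apply]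
      rw [Matrix.conjTranspose_smul, Matrix.smul_mul, Matrix.mul_smul, smul_smul,
        show star c = c by simp [hc], card_sqrt_sq, std_mul_std]
    have hmem : (((Fintype.card κ : ℂ))⁻¹ • Matrix.single l' l (1:ℂ)) ∈ confGraph (depolK ι κ) := by
      rw [← hgen]
      exact Submodule.subset_span ⟨e (k, l), e (k, l'), rfl⟩
    have := Submodule.smul_mem (confGraph (depolK ι κ)) (Fintype.card κ : ℂ) hmem
    rwa [smul_smul, mul_inv_cancel₀ (by exact_mod_cast hd.ne'), one_smul] at this
  rw [Matrix.matrix_eq_sum_single a]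
  refine Submodule.sum_mem _ fun l' _ => Submodule.sum_mem _ fun l _ => ?_
  have : Matrix.single l' l (a l' l) = a l' l • Matrix.single l' l (1:ℂ) := by
    rw [Matrix.smul_single, smul_eq_mul, mul_one]
  rw [this]
  exact Submodule.smul_mem _ _ (hstd l' l)

end NE

end Aux

/-- if `N = λ₀ N₀ + λ₁ N₁` is a strict convex combination of channels,
then the confusability graph of `N` (computed from any Kraus representation; it is
representation independent) contains those of `N₀` and `N₁`.  Consequently, every
channel in the relative interior of the set of channels has confusability graph equal
to all of `B(H)`. -/
theorem stmt_13 {ι κ : Type*} [Fintype ι] [DecidableEq ι] [Fintype κ] [DecidableEq κ]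
    [Nonempty ι] [Nonempty κ] :
    (∀ (N₀ N₁ N : Matrix ι ι ℂ →ₗ[ℂ] Matrix κ κ ℂ) (l₀ l₁ : ℝ),
      IsCPTP N₀ → IsCPTP N₁ → l₀ ∈ Set.Ioo (0 : ℝ) 1 → l₁ ∈ Set.Ioo (0 : ℝ) 1 →
      l₀ + l₁ = 1 → N = ((l₀ : ℝ) : ℂ) • N₀ + ((l₁ : ℝ) : ℂ) • N₁ →
      ∀ (m : ℕ) (G : Fin m → Matrix κ ι ℂ), IsKrausRep N G →
        (∀ (m₀ : ℕ) (E : Fin m₀ → Matrix κ ι ℂ), IsKrausRep N₀ E →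
          confGraph E ≤ confGraph G) ∧
        (∀ (m₁ : ℕ) (E : Fin m₁ → Matrix κ ι ℂ), IsKrausRep N₁ E →
          confGraph E ≤ confGraph G)) ∧
    (∀ N : Matrix ι ι ℂ →ₗ[ℂ] Matrix κ κ ℂ,
      AlgRelInterior {T : Matrix ι ι ℂ →ₗ[ℂ] Matrix κ κ ℂ | IsCPTP T} N →
      ∀ (m : ℕ) (G : Fin m → Matrix κ ι ℂ), IsKrausRep N G →
        confGraph G = ⊤) := by
  have part1 : ∀ (N₀ N₁ N : Matrix ι ι ℂ →ₗ[ℂ] Matrix κ κ ℂ) (l₀ l₁ : ℝ),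
      IsCPTP N₀ → IsCPTP N₁ → l₀ ∈ Set.Ioo (0 : ℝ) 1 → l₁ ∈ Set.Ioo (0 : ℝ) 1 →
      l₀ + l₁ = 1 → N = ((l₀ : ℝ) : ℂ) • N₀ + ((l₁ : ℝ) : ℂ) • N₁ →
      ∀ (m : ℕ) (G : Fin m → Matrix κ ι ℂ), IsKrausRep N G →
        (∀ (m₀ : ℕ) (E : Fin m₀ → Matrix κ ι ℂ), IsKrausRep N₀ E →
          confGraph E ≤ confGraph G) ∧
        (∀ (m₁ : ℕ) (E : Fin m₁ → Matrix κ ι ℂ), IsKrausRep N₁ E →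
          confGraph E ≤ confGraph G) := by
    intro N₀ N₁ N l₀ l₁ h₀ h₁ hI₀ hI₁ _ hNdef m G hG
    obtain ⟨m₀', F₀, hF₀⟩ := h₀
    obtain ⟨m₁', F₁, hF₁⟩ := h₁
    have hN : ∀ a, N a = ((l₀ : ℝ) : ℂ) • N₀ a + ((l₁ : ℝ) : ℂ) • N₁ a := by
      intro a; rw [hNdef]; simp
    have hN' : ∀ a, N a = ((l₁ : ℝ) : ℂ) • N₁ a + ((l₀ : ℝ) : ℂ) • N₀ a := by
      intro a; rw [hN a, add_comm]
    constructor
    · intro m₀ E hE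
      exact key_half N₀ N₁ N l₀ l₁ hI₀.1 hI₁.1.le hN E hE.1 F₁ hF₁.1 G hG.1
    · intro m₁ E hE
      exact key_half N₁ N₀ N l₁ l₀ hI₁.1 hI₀.1.le hN' E hE.1 F₀ hF₀.1 G hG.1
  refine ⟨part1, ?_⟩
  intro N hN m G hG
  have hdep : IsCPTP (depol ι κ) := ⟨_, depolK ι κ, depol_kraus.1, depol_kraus.2⟩
  obtain ⟨t, ht, hM⟩ := hN.2 (depol ι κ) hdep
  set M : Matrix ι ι ℂ →ₗ[ℂ] Matrix κ κ ℂ := depol ι κ + ((t : ℝ) : ℂ) • (N - depol ι κ) with hMdef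
  have ht0 : (0 : ℝ) < t := lt_trans one_pos ht
  have hts : (t : ℂ) ≠ 0 := by exact_mod_cast ht0.ne'
  have hNeq : N = (((1/t : ℝ)) : ℂ) • M + (((1 - 1/t : ℝ)) : ℂ) • depol ι κ := by
    rw [hMdef]
    push_cast
    match_scalars <;> field_simp <;> ring
  have h1 : (1/t : ℝ) ∈ Set.Ioo (0:ℝ) 1 := ⟨by positivity, by rw [div_lt_one ht0]; exact ht⟩
  have h2 : (1 - 1/t : ℝ) ∈ Set.Ioo (0:ℝ) 1 := by
    constructor
    · simp only [sub_pos]; exact h1.2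
    · simp only [sub_lt_self_iff]; exact h1.1
  have hsum : (1/t : ℝ) + (1 - 1/t : ℝ) = 1 := by ring
  have := (part1 M (depol ι κ) N (1/t) (1 - 1/t) hM hdep h1 h2 hsum hNeq m G hG).2
    _ (depolK ι κ) ⟨depol_kraus.1, depol_kraus.2⟩
  rw [depol_conf_top] at this
  exact top_le_iff.mp this
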